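/- Let f : ℝ^{n×m} → ℝ be continuous, λ > 0, μ > 0. If (Ū, V̄) ∈ ℝ^{n×r} × ℝ^{m×r} is a strong local minimizer of F_μ (i.e. there exist α > 0 and δ > 0 such that F_μ(U,V) ≥ F_μ(Ū,V̄) + α‖(U,V) − (Ū,V̄)‖_F² whenever ‖(U,V) − (Ū,V̄)‖_F ≤ δ), then (Ū, V̄) is a strong local minimizer of Φ_{λ,μ}: there exist α' > 0 and ε > 0 such that Φ_{λ,μ}(U,V) ≥ Φ_{λ,μ}(Ū,V̄) + α'‖(U,V) − (Ū,V̄)‖_F² whenever ‖(U,V) − (Ū,V̄)‖_F ≤ ε. -/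
import Mathlib


open Filter Topology Matrix

/-- The Frobenius (trace) inner product `⟨A,B⟩ = trace(AᵀB) = ∑ᵢⱼ Aᵢⱼ Bᵢⱼ` on matrices. -/
noncomputable def frobInner {α β : Type*} [Fintype α] [Fintype β] (A B : Matrix α β ℝ) : ℝ :=
  ∑ i, ∑ j, A i j * B i j

/-- The column `ℓ_{2,0}`-norm: the number of nonzero columns. -/
noncomputable def l20 {α β : Type*} [Fintype α] [Fintype β] (A : Matrix α β ℝ) : ℕ :=
  {j : β | (fun i => A i j) ≠ 0}.ncard

/-- `F_μ(U,V) = f(UVᵀ) + (μ/2)(‖U‖_F² + ‖V‖_F²)`. -/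
noncomputable def Fmu {n m r : ℕ} (f : Matrix (Fin n) (Fin m) ℝ → ℝ) (mu : ℝ)
    (U : Matrix (Fin n) (Fin r) ℝ) (V : Matrix (Fin m) (Fin r) ℝ) : ℝ :=
  f (U * Vᵀ) + mu / 2 * (frobInner U U + frobInner V V)

/-- `Φ_{λ,μ}(U,V) = f(UVᵀ) + (μ/2)(‖U‖_F² + ‖V‖_F²) + λ(‖U‖_{2,0} + ‖V‖_{2,0})`. -/
noncomputable def Phi {n m r : ℕ} (f : Matrix (Fin n) (Fin m) ℝ → ℝ) (lam mu : ℝ)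
    (U : Matrix (Fin n) (Fin r) ℝ) (V : Matrix (Fin m) (Fin r) ℝ) : ℝ :=
  Fmu f mu U V + lam * ((l20 U : ℝ) + (l20 V : ℝ))

/-- The squared Frobenius norm of a pair: `‖(U,V)‖_F² = ‖U‖_F² + ‖V‖_F²`. -/
noncomputable def pairNormSq {n m r : ℕ}
    (U : Matrix (Fin n) (Fin r) ℝ) (V : Matrix (Fin m) (Fin r) ℝ) : ℝ :=
  frobInner U U + frobInner V V

lemma frobInner_self_nonneg {α β : Type*} [Fintype α] [Fintype β] (A : Matrix α β ℝ) :
    0 ≤ frobInner A A :=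
  Finset.sum_nonneg fun _ _ => Finset.sum_nonneg fun _ _ => mul_self_nonneg _

lemma entry_sq_le_frob {α β : Type*} [Fintype α] [Fintype β] (A : Matrix α β ℝ) (i : α) (j : β) :
    A i j * A i j ≤ frobInner A A := by
  unfold frobInner
  calc A i j * A i j ≤ ∑ j, A i j * A i j :=
        Finset.single_le_sum (f := fun j => A i j * A i j)
          (fun j _ => mul_self_nonneg _) (Finset.mem_univ j)
    _ ≤ ∑ i, ∑ j, A i j * A i j :=
        Finset.single_le_sum (f := fun i => ∑ j, A i j * A i j)
          (fun i _ => Finset.sum_nonneg fun j _ => mul_self_nonneg _) (Finset.mem_univ i)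

/-- if `(Ū,V̄)` is a strong local minimizer of `F_μ`, then it is a strong
local minimizer of `Φ_{λ,μ}`. -/
theorem strong_local_min_Fmu_imp_Phi {n m r : ℕ}
    (f : Matrix (Fin n) (Fin m) ℝ → ℝ) (hf : Continuous f)
    (lam mu : ℝ) (hlam : 0 < lam) (hmu : 0 < mu)
    (Ubar : Matrix (Fin n) (Fin r) ℝ) (Vbar : Matrix (Fin m) (Fin r) ℝ)
    (hmin : ∃ α > (0:ℝ), ∃ δ > (0:ℝ), ∀ (U : Matrix (Fin n) (Fin r) ℝ)
        (V : Matrix (Fin m) (Fin r) ℝ),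
        Real.sqrt (pairNormSq (U - Ubar) (V - Vbar)) ≤ δ →
        Fmu f mu U V ≥ Fmu f mu Ubar Vbar + α * pairNormSq (U - Ubar) (V - Vbar)) :
    ∃ α' > (0:ℝ), ∃ ε > (0:ℝ), ∀ (U : Matrix (Fin n) (Fin r) ℝ)
        (V : Matrix (Fin m) (Fin r) ℝ),
        Real.sqrt (pairNormSq (U - Ubar) (V - Vbar)) ≤ ε →
        Phi f lam mu U V ≥ Phi f lam mu Ubar Vbar + α' * pairNormSq (U - Ubar) (V - Vbar) := by
  obtain ⟨α, hα, δ, hδ, H⟩ := hmin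
  -- finite set of absolute values of nonzero entries of Ubar and Vbar, plus 1
  set s : Finset ℝ := insert (1:ℝ)
    (((Finset.univ.image fun p : Fin n × Fin r => |Ubar p.1 p.2|) ∪
      (Finset.univ.image fun p : Fin m × Fin r => |Vbar p.1 p.2|)).filter fun x => 0 < x)
    with hs
  have hsne : s.Nonempty := ⟨1, Finset.mem_insert_self _ _⟩
  obtain ⟨c, hcmem, hcmin⟩ : ∃ c ∈ s, ∀ x ∈ s, c ≤ x :=
    ⟨s.min' hsne, s.min'_mem hsne, fun x hx => s.min'_le x hx⟩
  have hcpos : 0 < c := by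
    rw [hs] at hcmem
    rcases Finset.mem_insert.mp hcmem with h | h
    · rw [h]; norm_num
    · exact (Finset.mem_filter.mp h).2
  refine ⟨α, hα, min δ (c / 2), lt_min hδ (by linarith), fun U V hUV => ?_⟩
  have hUVδ : Real.sqrt (pairNormSq (U - Ubar) (V - Vbar)) ≤ δ :=
    le_trans hUV (min_le_left _ _)
  have hUVc : Real.sqrt (pairNormSq (U - Ubar) (V - Vbar)) < c :=
    lt_of_le_of_lt (le_trans hUV (min_le_right _ _)) (by linarith)
  -- entry-wise bound
  have hentU : ∀ i j, |U i j - Ubar i j| < c := by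
    intro i j
    refine lt_of_le_of_lt ?_ hUVc
    have h1 : (U - Ubar) i j * (U - Ubar) i j ≤ pairNormSq (U - Ubar) (V - Vbar) := by
      have := entry_sq_le_frob (U - Ubar) i j
      have := frobInner_self_nonneg (V - Vbar)
      unfold pairNormSq; linarith
    have h2 : |U i j - Ubar i j| = Real.sqrt ((U - Ubar) i j * (U - Ubar) i j) := by
      rw [Real.sqrt_mul_self_eq_abs]; rfl
    rw [h2]; exact Real.sqrt_le_sqrt h1
  have hentV : ∀ i j, |V i j - Vbar i j| < c := by
    intro i j
    refine lt_of_le_of_lt ?_ hUVc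
    have h1 : (V - Vbar) i j * (V - Vbar) i j ≤ pairNormSq (U - Ubar) (V - Vbar) := by
      have := entry_sq_le_frob (V - Vbar) i j
      have := frobInner_self_nonneg (U - Ubar)
      unfold pairNormSq; linarith
    have h2 : |V i j - Vbar i j| = Real.sqrt ((V - Vbar) i j * (V - Vbar) i j) := by
      rw [Real.sqrt_mul_self_eq_abs]; rfl
    rw [h2]; exact Real.sqrt_le_sqrt h1
  -- l20 monotone near the point
  have hl20U : l20 Ubar ≤ l20 U := by
    apply Set.ncard_le_ncard _ (Set.toFinite _)
    intro j hj
    obtain ⟨i, hi⟩ := Function.ne_iff.mp hj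
    have hcle : c ≤ |Ubar i j| := by
      apply hcmin
      rw [hs]
      apply Finset.mem_insert_of_mem
      refine Finset.mem_filter.mpr ⟨Finset.mem_union_left _ ?_, abs_pos.mpr hi⟩
      exact Finset.mem_image.mpr ⟨(i, j), Finset.mem_univ _, rfl⟩
    refine Function.ne_iff.mpr ⟨i, fun h0 => ?_⟩
    have hlt := hentU i j
    have h0' : U i j = 0 := by simpa using h0
    rw [h0', zero_sub, abs_neg] at hlt
    linarith
  have hl20V : l20 Vbar ≤ l20 V := by
    apply Set.ncard_le_ncard _ (Set.toFinite _)
    intro j hj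
    obtain ⟨i, hi⟩ := Function.ne_iff.mp hj
    have hcle : c ≤ |Vbar i j| := by
      apply hcmin
      rw [hs]
      apply Finset.mem_insert_of_mem
      refine Finset.mem_filter.mpr ⟨Finset.mem_union_right _ ?_, abs_pos.mpr hi⟩
      exact Finset.mem_image.mpr ⟨(i, j), Finset.mem_univ _, rfl⟩
    refine Function.ne_iff.mpr ⟨i, fun h0 => ?_⟩
    have hlt := hentV i j
    have h0' : V i j = 0 := by simpa using h0
    rw [h0', zero_sub, abs_neg] at hlt
    linarith
  have hF := H U V hUVδ
  have h20 : lam * ((l20 Ubar : ℝ) + (l20 Vbar : ℝ)) ≤ lam * ((l20 U : ℝ) + (l20 V : ℝ)) := by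
    apply mul_le_mul_of_nonneg_left _ hlam.le
    have h1 : (l20 Ubar : ℝ) ≤ l20 U := Nat.cast_le.mpr hl20U
    have h2 : (l20 Vbar : ℝ) ≤ l20 V := Nat.cast_le.mpr hl20V
    linarith
  unfold Phi
  linarith
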